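/- Let A be a complete normed ring that is a Banach algebra over ℂ, let X ∈ A satisfy ‖X‖ ≤ ln 2, let K₁ < K₂ be natural numbers, and let p ∈ [0,1). Define F₂ = Σ_{k=0}^{K₁} Xᵏ/k! + (1−p)⁻¹ • Σ_{k=K₁+1}^{K₂} Xᵏ/k!. Then ‖exp(X) − F₂‖ ≤ (p/(1−p))·2·(ln 2)^{K₁+1}/(K₁+1)! + 2·(ln 2)^{K₂+1}/(K₂+1)!. -/

import Mathlib

open Finset

private lemma key_factorial_ineq (x : ℝ) (hx0 : 0 ≤ x) (m i : ℕ) :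
    x ^ (m + i) / ((m + i).factorial : ℝ)
      ≤ x ^ m / (m.factorial : ℝ) * (x ^ i / (i.factorial : ℝ)) := by
  have hdvd : (m.factorial * i.factorial : ℕ) ∣ (m + i).factorial :=
    Nat.factorial_mul_factorial_dvd_factorial_add m i
  have hle : ((m.factorial : ℝ) * (i.factorial : ℝ)) ≤ ((m + i).factorial : ℝ) := by
    exact_mod_cast Nat.le_of_dvd (Nat.factorial_pos _) hdvd
  have hpos : (0 : ℝ) < (m.factorial : ℝ) * (i.factorial : ℝ) := by positivity
  calc x ^ (m + i) / ((m + i).factorial : ℝ)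
      ≤ x ^ (m + i) / ((m.factorial : ℝ) * (i.factorial : ℝ)) := by
        apply div_le_div_of_nonneg_left (by positivity) hpos hle
    _ = x ^ m / (m.factorial : ℝ) * (x ^ i / (i.factorial : ℝ)) := by
        rw [pow_add]; ring

private lemma tail_fin_bound (x : ℝ) (hx0 : 0 ≤ x) (m N : ℕ) :
    ∑ k ∈ Finset.Icc m N, x ^ k / (k.factorial : ℝ)
      ≤ x ^ m / (m.factorial : ℝ) * Real.exp x := by
  rw [← Finset.Ico_add_one_right_eq_Icc, Finset.sum_Ico_eq_sum_range]
  calc ∑ i ∈ range (N + 1 - m), x ^ (m + i) / ((m + i).factorial : ℝ)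
      ≤ ∑ i ∈ range (N + 1 - m), x ^ m / (m.factorial : ℝ) * (x ^ i / (i.factorial : ℝ)) :=
        Finset.sum_le_sum fun i _ => key_factorial_ineq x hx0 m i
    _ = x ^ m / (m.factorial : ℝ) * ∑ i ∈ range (N + 1 - m), x ^ i / (i.factorial : ℝ) := by
        rw [Finset.mul_sum]
    _ ≤ x ^ m / (m.factorial : ℝ) * Real.exp x :=
        mul_le_mul_of_nonneg_left (Real.sum_le_exp_of_nonneg hx0 _) (by positivity)

private lemma tail_inf_bound (x : ℝ) (hx0 : 0 ≤ x) (m : ℕ) :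
    ∑' k : ℕ, x ^ (k + m) / ((k + m).factorial : ℝ)
      ≤ x ^ m / (m.factorial : ℝ) * Real.exp x := by
  have hs : Summable (fun k : ℕ => x ^ k / (k.factorial : ℝ)) :=
    Real.summable_pow_div_factorial x
  have hs1 : Summable (fun k : ℕ => x ^ (k + m) / ((k + m).factorial : ℝ)) :=
    (summable_nat_add_iff m).2 hs
  have hs2 : Summable (fun k : ℕ => x ^ m / (m.factorial : ℝ) * (x ^ k / (k.factorial : ℝ))) :=
    hs.mul_left _
  have h1 : ∑' k : ℕ, x ^ (k + m) / ((k + m).factorial : ℝ)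
      ≤ ∑' k : ℕ, x ^ m / (m.factorial : ℝ) * (x ^ k / (k.factorial : ℝ)) := by
    refine Summable.tsum_le_tsum (fun k => ?_) hs1 hs2
    simpa [add_comm k m] using key_factorial_ineq x hx0 m k
  have hexp : Real.exp x = ∑' k : ℕ, x ^ k / (k.factorial : ℝ) := by
    rw [Real.exp_eq_exp_ℝ, NormedSpace.exp_eq_tsum_div]
  calc _ ≤ _ := h1
    _ = x ^ m / (m.factorial : ℝ) * ∑' k : ℕ, x ^ k / (k.factorial : ℝ) := tsum_mul_left
    _ = x ^ m / (m.factorial : ℝ) * Real.exp x := by rw [hexp]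

set_option maxHeartbeats 1000000 in
/-- Truncation-error bound of Lemma A.2: for `‖X‖ ≤ ln 2`, the modified
truncated Taylor series `F₂` (orders `K₁+1,…,K₂` amplified by `1/(1−p)`)
approximates `exp X` with error at most
`(p/(1−p))·2(ln 2)^{K₁+1}/(K₁+1)! + 2(ln 2)^{K₂+1}/(K₂+1)!`. -/
theorem modified_exp_taylor_truncation_bound
    {A : Type*} [NormedRing A] [CompleteSpace A] [NormedAlgebra ℂ A]
    (X : A) (hX : ‖X‖ ≤ Real.log 2)
    (K₁ K₂ : ℕ) (hK : K₁ < K₂) (p : ℝ) (hp0 : 0 ≤ p) (hp1 : p < 1)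
    (F₂ : A)
    (hF₂ : F₂ = (∑ k ∈ Finset.range (K₁ + 1), ((k.factorial : ℂ))⁻¹ • X ^ k)
        + ((1 : ℂ) - (p : ℂ))⁻¹ •
            ∑ k ∈ Finset.Icc (K₁ + 1) K₂, ((k.factorial : ℂ))⁻¹ • X ^ k) :
    ‖NormedSpace.exp X - F₂‖
      ≤ (p / (1 - p)) * (2 * Real.log 2 ^ (K₁ + 1) / (K₁ + 1).factorial)
        + 2 * Real.log 2 ^ (K₂ + 1) / (K₂ + 1).factorial := by
  set x := ‖X‖ with hx
  have hx0 : (0 : ℝ) ≤ x := norm_nonneg X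
  set f : ℕ → A := fun k => ((k.factorial : ℂ))⁻¹ • X ^ k with hf
  -- pointwise norm bound for k ≥ 1
  have hnorm : ∀ k : ℕ, 0 < k → ‖f k‖ ≤ x ^ k / (k.factorial : ℝ) := by
    intro k hk
    have h1 : ‖f k‖ = ((k.factorial : ℝ))⁻¹ * ‖X ^ k‖ := by
      simp [hf, norm_smul]
    rw [h1, div_eq_inv_mul]
    exact mul_le_mul_of_nonneg_left (norm_pow_le' X hk) (by positivity)
  -- x^m/m! * exp x ≤ 2 (log 2)^m / m!
  have hfinal : ∀ m : ℕ, x ^ m / (m.factorial : ℝ) * Real.exp x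
      ≤ 2 * Real.log 2 ^ m / (m.factorial : ℝ) := by
    intro m
    have h1 : x ^ m ≤ Real.log 2 ^ m := pow_le_pow_left₀ hx0 hX m
    have h2 : Real.exp x ≤ 2 := by
      calc Real.exp x ≤ Real.exp (Real.log 2) := Real.exp_le_exp.2 hX
        _ = 2 := Real.exp_log (by norm_num)
    have hm : (0 : ℝ) < (m.factorial : ℝ) := by
      exact_mod_cast Nat.factorial_pos m
    calc x ^ m / (m.factorial : ℝ) * Real.exp x
        = x ^ m * Real.exp x / (m.factorial : ℝ) := by ring
      _ ≤ Real.log 2 ^ m * 2 / (m.factorial : ℝ) := by gcongr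
      _ = 2 * Real.log 2 ^ m / (m.factorial : ℝ) := by ring
  have hsummable : Summable f := NormedSpace.expSeries_summable' (𝕂 := ℂ) X
  set T : A := ∑ k ∈ Finset.Icc (K₁ + 1) K₂, f k with hT
  set S2 : A := ∑ k ∈ Finset.range (K₂ + 1), f k with hS2
  have hsplitsum : S2 = (∑ k ∈ Finset.range (K₁ + 1), f k) + T := by
    rw [hS2, hT]
    simp only [Finset.range_eq_Ico]
    rw [← Finset.Ico_add_one_right_eq_Icc]
    exact (Finset.sum_Ico_consecutive f (Nat.zero_le _) (by omega)).symm
  have hre : (1 : ℝ) - p ≠ 0 := by linarith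
  have hne : (1 : ℂ) - (p : ℂ) ≠ 0 := by
    simpa using Complex.ofReal_ne_zero.mpr hre
  have hc : ((1 : ℂ) - (p : ℂ))⁻¹ = 1 + ((p / (1 - p) : ℝ) : ℂ) := by
    push_cast
    field_simp
    ring
  have hF₂' : F₂ = S2 + ((p / (1 - p) : ℝ) : ℂ) • T := by
    rw [hF₂, hc, add_smul, one_smul, hsplitsum]
    abel
  have hdecomp : NormedSpace.exp X - F₂
      = (NormedSpace.exp X - S2) - ((p / (1 - p) : ℝ) : ℂ) • T := by
    rw [hF₂']; abel
  -- tail for S2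
  have hexpX : NormedSpace.exp X = ∑' k : ℕ, f k := by
    rw [NormedSpace.exp_eq_tsum ℂ]
  have htail : NormedSpace.exp X - S2 = ∑' k : ℕ, f (k + (K₂ + 1)) := by
    rw [hexpX, hS2, ← Summable.sum_add_tsum_nat_add (K₂ + 1) hsummable]
    abel
  have hsshift : Summable (fun k : ℕ => x ^ (k + (K₂ + 1)) / ((k + (K₂ + 1)).factorial : ℝ)) :=
    (summable_nat_add_iff (K₂ + 1)).2 (Real.summable_pow_div_factorial x)
  have hnormsummable : Summable fun k : ℕ => ‖f (k + (K₂ + 1))‖ :=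
    Summable.of_nonneg_of_le (fun k => norm_nonneg _)
      (fun k => hnorm _ (by omega)) hsshift
  have hbound2 : ‖NormedSpace.exp X - S2‖
      ≤ 2 * Real.log 2 ^ (K₂ + 1) / ((K₂ + 1).factorial : ℝ) := by
    rw [htail]
    calc ‖∑' k : ℕ, f (k + (K₂ + 1))‖
        ≤ ∑' k : ℕ, ‖f (k + (K₂ + 1))‖ := norm_tsum_le_tsum_norm hnormsummable
      _ ≤ ∑' k : ℕ, x ^ (k + (K₂ + 1)) / ((k + (K₂ + 1)).factorial : ℝ) :=
          Summable.tsum_le_tsum (fun k => hnorm _ (by omega)) hnormsummable hsshift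
      _ ≤ x ^ (K₂ + 1) / ((K₂ + 1).factorial : ℝ) * Real.exp x := tail_inf_bound x hx0 _
      _ ≤ 2 * Real.log 2 ^ (K₂ + 1) / ((K₂ + 1).factorial : ℝ) := hfinal _
  have hbound1 : ‖T‖ ≤ 2 * Real.log 2 ^ (K₁ + 1) / ((K₁ + 1).factorial : ℝ) := by
    calc ‖T‖ ≤ ∑ k ∈ Finset.Icc (K₁ + 1) K₂, ‖f k‖ := norm_sum_le _ _
      _ ≤ ∑ k ∈ Finset.Icc (K₁ + 1) K₂, x ^ k / (k.factorial : ℝ) := by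
          refine Finset.sum_le_sum fun k hk => hnorm k ?_
          have := (Finset.mem_Icc.1 hk).1; omega
      _ ≤ x ^ (K₁ + 1) / ((K₁ + 1).factorial : ℝ) * Real.exp x := tail_fin_bound x hx0 _ _
      _ ≤ 2 * Real.log 2 ^ (K₁ + 1) / ((K₁ + 1).factorial : ℝ) := hfinal _
  have hr0 : (0 : ℝ) ≤ p / (1 - p) := div_nonneg hp0 (by linarith)
  have hnormsmul : ‖((p / (1 - p) : ℝ) : ℂ) • T‖ = (p / (1 - p)) * ‖T‖ := by
    rw [norm_smul, Complex.norm_real, Real.norm_eq_abs, abs_of_nonneg hr0]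
  calc ‖NormedSpace.exp X - F₂‖
      ≤ ‖NormedSpace.exp X - S2‖ + ‖((p / (1 - p) : ℝ) : ℂ) • T‖ := by
        rw [hdecomp]; exact norm_sub_le _ _
    _ = ‖NormedSpace.exp X - S2‖ + (p / (1 - p)) * ‖T‖ := by rw [hnormsmul]
    _ ≤ 2 * Real.log 2 ^ (K₂ + 1) / ((K₂ + 1).factorial : ℝ)
          + (p / (1 - p)) * (2 * Real.log 2 ^ (K₁ + 1) / ((K₁ + 1).factorial : ℝ)) :=
        add_le_add hbound2 (mul_le_mul_of_nonneg_left hbound1 hr0)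
    _ = (p / (1 - p)) * (2 * Real.log 2 ^ (K₁ + 1) / (K₁ + 1).factorial)
          + 2 * Real.log 2 ^ (K₂ + 1) / (K₂ + 1).factorial := by ring
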